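/- Let 𝒰 be an age and let 𝒞 ⊆ 𝒰 be a Fraïssé class whose Fraïssé limit is locally finite and has an oligomorphic automorphism group. Let T be a countable structure whose age is contained in 𝒰, and let u : U → T be a universal homogeneous homomorphism to T within 𝒞̄. If Aut(T) is oligomorphic, then Aut(U) is oligomorphic. -/

import Mathlib

universe u v w

open FirstOrder FirstOrder.Language CategoryTheory

namespace UHomog

variable (L : FirstOrder.Language.{u, v})

/-- The class `𝒞̄` of countable structures whose age is contained in `K`. -/
def InBar (K : Set (Bundled.{w} L.Structure)) (A : Type w) [L.Structure A] : Prop :=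
  Countable A ∧ L.age A ⊆ K

/-- A homomorphism `u : U → T` is universal within `𝒞̄ = K̄` if every homomorphism from a member
of `K̄` to `T` factors through an embedding into `U`. -/
def IsUniversalHom (K : Set (Bundled.{w} L.Structure)) {U T : Type w}
    [L.Structure U] [L.Structure T] (u : U →[L] T) : Prop :=
  ∀ A : Bundled.{w} L.Structure, InBar L K A → ∀ h : A →[L] T,
    ∃ ι : A ↪[L] U, ∀ a : A, u (ι a) = h a

/-- A homomorphism `u : U → T` is homogeneous if every embedding of a finitely generated
substructure of `U` into `U` compatible with `u` extends to an automorphism of `U` compatible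
with `u`. -/
def IsHomogeneousHom {U T : Type w} [L.Structure U] [L.Structure T] (u : U →[L] T) : Prop :=
  ∀ S : L.Substructure U, S.FG → ∀ ι : S ↪[L] U,
    (∀ s : S, u (ι s) = u s) →
    ∃ α : U ≃[L] U, (∀ x : U, u (α x) = u x) ∧ ∀ s : S, α s = ι s

/-- An age: a class of finitely generated structures with countably many isomorphism types,
closed under isomorphism, with the hereditary property and the joint embedding property. -/
def IsAge (K : Set (Bundled.{w} L.Structure)) : Prop :=
  K.Nonempty ∧
  (∀ M : Bundled.{w} L.Structure, M ∈ K → Structure.FG L M) ∧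
  (∀ M N : Bundled.{w} L.Structure, Nonempty (M ≃[L] N) → (M ∈ K ↔ N ∈ K)) ∧
  (∃ S : Set (Bundled.{w} L.Structure), S.Countable ∧
    ∀ M ∈ K, ∃ N ∈ S, Nonempty (M ≃[L] N)) ∧
  Hereditary K ∧ JointEmbedding K

/-- The square `g₁ ∘ f₁ = g₂ ∘ f₂` is a pushout square in the category of countable structures
with age contained in `K`, with homomorphisms as morphisms. -/
def IsPushoutSquare (K : Set (Bundled.{w} L.Structure)) {A B₁ B₂ C : Type w}
    [L.Structure A] [L.Structure B₁] [L.Structure B₂] [L.Structure C]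
    (f₁ : A ↪[L] B₁) (f₂ : A ↪[L] B₂) (g₁ : B₁ →[L] C) (g₂ : B₂ →[L] C) : Prop :=
  g₁.comp f₁.toHom = g₂.comp f₂.toHom ∧
  ∀ D : Bundled.{w} L.Structure, InBar L K D → ∀ (k₁ : B₁ →[L] D) (k₂ : B₂ →[L] D),
    k₁.comp f₁.toHom = k₂.comp f₂.toHom →
    ∃! m : C →[L] D, m.comp g₁ = k₁ ∧ m.comp g₂ = k₂

/-- A strict Fraïssé class: a Fraïssé class in which every span of embeddings can be completed to
a canonical (pushout) amalgam. -/
def IsStrictFraisse (K : Set (Bundled.{w} L.Structure)) : Prop :=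
  IsFraisse K ∧
  ∀ A B₁ B₂ : Bundled.{w} L.Structure, A ∈ K → B₁ ∈ K → B₂ ∈ K →
    ∀ (f₁ : A ↪[L] B₁) (f₂ : A ↪[L] B₂),
      ∃ (C : Bundled.{w} L.Structure) (g₁ : B₁ →[L] C) (g₂ : B₂ →[L] C),
        C ∈ K ∧ IsPushoutSquare L K f₁ f₂ g₁ g₂

/-- A Fraïssé class `K₀` is free in the strict Fraïssé class `K` if it is closed with respect to
canonical (pushout) amalgams in `K`. -/
def IsFreeIn (K₀ K : Set (Bundled.{w} L.Structure)) : Prop :=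
  K₀ ⊆ K ∧
  ∀ A B₁ B₂ : Bundled.{w} L.Structure, A ∈ K₀ → B₁ ∈ K₀ → B₂ ∈ K₀ →
    ∀ (f₁ : A ↪[L] B₁) (f₂ : A ↪[L] B₂),
      ∃ (C : Bundled.{w} L.Structure) (g₁ : B₁ →[L] C) (g₂ : B₂ →[L] C),
        C ∈ K₀ ∧ IsPushoutSquare L K f₁ f₂ g₁ g₂

/-- The amalgamated extension property. -/
def AmalgamatedExtension (K : Set (Bundled.{w} L.Structure)) : Prop :=
  ∀ A B₁ B₂ T : Bundled.{w} L.Structure, A ∈ K → B₁ ∈ K → B₂ ∈ K → T ∈ K →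
    ∀ (f₁ : A ↪[L] B₁) (f₂ : A ↪[L] B₂) (h₁ : B₁ →[L] T) (h₂ : B₂ →[L] T),
      h₁.comp f₁.toHom = h₂.comp f₂.toHom →
      ∃ (C T' : Bundled.{w} L.Structure) (g₁ : B₁ ↪[L] C) (g₂ : B₂ ↪[L] C)
        (k : T ↪[L] T') (h : C →[L] T'),
        C ∈ K ∧ T' ∈ K ∧ g₁.comp f₁ = g₂.comp f₂ ∧
        h.comp g₁.toHom = k.toHom.comp h₁ ∧ h.comp g₂.toHom = k.toHom.comp h₂

/-- The homo amalgamation property (HAP). -/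
def HAP (K : Set (Bundled.{w} L.Structure)) : Prop :=
  ∀ A B₁ B₂ : Bundled.{w} L.Structure, A ∈ K → B₁ ∈ K → B₂ ∈ K →
    ∀ (f₁ : A ↪[L] B₁) (f₂ : A →[L] B₂),
      ∃ (C : Bundled.{w} L.Structure) (g₁ : B₁ →[L] C) (g₂ : B₂ ↪[L] C),
        C ∈ K ∧ g₁.comp f₁.toHom = g₂.toHom.comp f₂

/-- A homomorphism `r : A → B` is a retraction if it has a section. -/
def IsRetraction {A B : Type w} [L.Structure A] [L.Structure B] (r : A →[L] B) : Prop :=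
  ∃ ι : B →[L] A, ∀ b : B, r (ι b) = b

end UHomog

namespace UHomog

variable (L : FirstOrder.Language.{u, v})

open FirstOrder FirstOrder.Language in
/-- The automorphism group of `M` is oligomorphic: for each `n ≥ 1` there are only finitely many
orbits of `n`-tuples under automorphisms. -/
def AutOligomorphic (M : Type w) [L.Structure M] : Prop :=
  ∀ n : ℕ, 0 < n → ∃ S : Set (Fin n → M), S.Finite ∧
    ∀ x : Fin n → M, ∃ y ∈ S, ∃ g : M ≃[L] M, ∀ i, g (x i) = y i

open FirstOrder FirstOrder.Language in
/-- A structure is locally finite if all its finitely generated substructures are finite. -/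
def LocallyFinite (M : Type w) [L.Structure M] : Prop :=
  ∀ S : L.Substructure M, S.FG → Finite S

end UHomog

open FirstOrder.Language.Substructure FirstOrder.Language.PartialEquiv

open UHomog FirstOrder FirstOrder.Language in
/-- Proposition: if `K ⊆ 𝒰` is a Fraïssé class whose Fraïssé limit is locally finite with
oligomorphic automorphism group, `T ∈ 𝒰̄`, and `u : U → T` is a universal homogeneous
homomorphism within `K̄`, then oligomorphy of `Aut(T)` implies oligomorphy of `Aut(U)`. -/
theorem statement5
    (L : FirstOrder.Language.{u, v})
    [Countable (Σ l, L.Functions l)] [Countable (Σ l, L.Relations l)]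
    (𝒰 K : Set (Bundled.{w} L.Structure))
    (h𝒰 : IsAge L 𝒰) (hK : IsFraisse K) (hsub : K ⊆ 𝒰)
    (Flim : Type w) [L.Structure Flim] [Countable Flim]
    (hFlim : IsFraisseLimit K Flim)
    (hlf : LocallyFinite L Flim) (holig : AutOligomorphic L Flim)
    (T : Type w) [L.Structure T] (hT : InBar L 𝒰 T)
    (U : Type w) [L.Structure U] (hU : InBar L K U)
    (u : U →[L] T) (huniv : IsUniversalHom L K u) (hhomog : IsHomogeneousHom L u)
    (hTolig : AutOligomorphic L T) :
    AutOligomorphic L U := by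
  haveI : Countable U := hU.1
  have hext : ∀ (g : T ≃[L] T) (S : L.Substructure U), S.FG → ∀ ι : S ↪[L] U,
      (∀ s : S, u (ι s) = g (u (s : U))) →
      ∃ e : U ↪[L] U, (∀ a : U, u (e a) = g (u a)) ∧ ∀ s : S, e s = ι s := by
    intro g S hS ι hι
    obtain ⟨j, hj⟩ := huniv ⟨U, ‹L.Structure U›⟩ hU (g.toHom.comp u)
    have hj' : ∀ a : U, u (j a) = g (u a) := hj
    have hS'fg : (S.map j.toHom).FG := hS.map _
    let q := j.substructureEquivMap S
    let ι' : (S.map j.toHom) ↪[L] U := ι.comp q.symm.toEmbedding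
    have hcoe : ∀ t : (S.map j.toHom), (t : U) = j (q.symm t) := by
      intro t
      conv_lhs => rw [← q.apply_symm_apply t]
      exact (j.substructureEquivMap_apply S _).symm
    have hι' : ∀ t : (S.map j.toHom), u (ι' t) = u (t : U) := by
      intro t
      calc u (ι' t) = u (ι (q.symm t)) := rfl
      _ = g (u ((q.symm t : S) : U)) := hι _
      _ = u (j ((q.symm t : S) : U)) := (hj' _).symm
      _ = u (t : U) := by rw [← hcoe]
    obtain ⟨α, hα1, hα2⟩ := hhomog (S.map j.toHom) hS'fg ι' hι'
    refine ⟨α.toEmbedding.comp j, fun a => by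
      calc u ((α.toEmbedding.comp j) a) = u (α (j a)) := rfl
      _ = u (j a) := hα1 _
      _ = g (u a) := hj' _, fun s => ?_⟩
    have hmem : j s ∈ S.map j.toHom := ⟨(s : U), s.2, rfl⟩
    have h1 : α (j s) = ι' ⟨j s, hmem⟩ := hα2 ⟨j s, hmem⟩
    have h2 : q s = ⟨j s, hmem⟩ := Subtype.ext (j.substructureEquivMap_apply S s)
    calc (α.toEmbedding.comp j) (s : U) = α (j s) := rfl
    _ = ι' ⟨j s, hmem⟩ := h1
    _ = ι (q.symm (q s)) := by rw [h2]; rfl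
    _ = ι s := by rw [q.symm_apply_apply]
  have hkey : ∀ (g : T ≃[L] T) (f0 : U ≃ₚ[L] U), f0.dom.FG →
      (∀ s : f0.dom, u (f0.toEmbedding s) = g (u (s : U))) →
      ∃ α : U ≃[L] U, ∀ s : f0.dom, α (s : U) = f0.toEmbedding s := by
    intro g f0 hfg hcompat
    classical
    have hsymm : ∀ (g : T ≃[L] T) (f : U ≃ₚ[L] U),
        (∀ s : f.dom, u (f.toEmbedding s) = g (u (s : U))) →
        ∀ t : f.symm.dom, u (f.symm.toEmbedding t) = g.symm (u (t : U)) := by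
      intro g f hf t
      have h2 := hf (f.toEquiv.symm t)
      rw [toEmbedding_apply, f.toEquiv.apply_symm_apply t] at h2
      have h3 : f.symm.toEmbedding t = ((f.toEquiv.symm t : f.dom) : U) := rfl
      rw [h3, h2, g.symm_apply_apply]
    have forth : ∀ (g : T ≃[L] T) (f : U ≃ₚ[L] U), f.dom.FG →
        (∀ s : f.dom, u (f.toEmbedding s) = g (u (s : U))) → ∀ m : U,
        ∃ f' : U ≃ₚ[L] U, f'.dom.FG ∧ (∀ s : f'.dom, u (f'.toEmbedding s) = g (u (s : U))) ∧
          f ≤ f' ∧ m ∈ f'.dom := by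
      intro g f hFG hf m
      obtain ⟨e, he1, he2⟩ := hext g f.dom hFG f.toEmbedding hf
      set A := f.dom ⊔ closure L {m} with hA
      set em : ↥A ↪[L] U := e.comp (subtype A) with hem
      have hmem : m ∈ A := by
        rw [hA]
        have h1 : m ∈ closure L ({m} : Set U) := subset_closure (Set.mem_singleton m)
        have h2 : closure L ({m} : Set U) ≤ f.dom ⊔ closure L ({m} : Set U) := le_sup_right
        exact h2 h1
      refine ⟨⟨A, em.toHom.range, em.equivRange⟩, hFG.sup (fg_closure_singleton m),
        fun s => ?_, ⟨le_sup_left, ?_⟩, hmem⟩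
      · calc u ((⟨A, em.toHom.range, em.equivRange⟩ : U ≃ₚ[L] U).toEmbedding s)
            = u (em s) := by rw [toEmbedding_apply]; exact congrArg u (em.equivRange_apply s)
        _ = g (u (s : U)) := he1 _
      · apply Embedding.ext
        intro x
        calc ((subtype _).comp
              ((⟨A, em.toHom.range, em.equivRange⟩ : U ≃ₚ[L] U).toEquiv.toEmbedding.comp
                (Substructure.inclusion le_sup_left))) x
            = em (Substructure.inclusion le_sup_left x) := em.equivRange_apply _
        _ = e (x : U) := rfl
        _ = f.toEmbedding x := he2 x
        _ = ((subtype _).comp f.toEquiv.toEmbedding) x := rfl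
    have back : ∀ (g : T ≃[L] T) (f : U ≃ₚ[L] U), f.dom.FG →
        (∀ s : f.dom, u (f.toEmbedding s) = g (u (s : U))) → ∀ m : U,
        ∃ f' : U ≃ₚ[L] U, f'.dom.FG ∧ (∀ s : f'.dom, u (f'.toEmbedding s) = g (u (s : U))) ∧
          f ≤ f' ∧ m ∈ f'.cod := by
      intro g f hFG hf m
      obtain ⟨f'', h1, h2, h3, h4⟩ :=
        forth g.symm f.symm (f.dom_fg_iff_cod_fg.1 hFG) (hsymm g f hf) m
      have hc : ∀ s : f''.symm.dom, u (f''.symm.toEmbedding s) = g (u (s : U)) := by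
        intro s
        have := hsymm g.symm f'' h2 s
        rwa [show g.symm.symm = g from rfl] at this
      exact ⟨f''.symm, f''.dom_fg_iff_cod_fg.1 h1, hc,
        symm_le_iff.1 h3, h4⟩
    let P := {f : U ≃ₚ[L] U // f.dom.FG ∧ ∀ s : f.dom, u (f.toEmbedding s) = g (u (s : U))}
    haveI : Encodable (U ⊕ U) := Encodable.ofCountable _
    let D : U ⊕ U → Order.Cofinal P := fun i =>
      match i with
      | .inl m => ⟨{p : P | m ∈ p.1.dom}, by
          intro p
          obtain ⟨f', hf1, hf2, hf3, hf4⟩ := forth g p.1 p.2.1 p.2.2 m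
          exact ⟨⟨f', hf1, hf2⟩, hf4, hf3⟩⟩
      | .inr m => ⟨{p : P | m ∈ p.1.cod}, by
          intro p
          obtain ⟨f', hf1, hf2, hf3, hf4⟩ := back g p.1 p.2.1 p.2.2 m
          exact ⟨⟨f', hf1, hf2⟩, hf4, hf3⟩⟩
    let p0 : P := ⟨f0, hfg, hcompat⟩
    let seq := Order.sequenceOfCofinals p0 D
    let Sfun : ℕ →o U ≃ₚ[L] U :=
      ⟨Subtype.val ∘ seq, (Subtype.mono_coe _).comp (Order.sequenceOfCofinals.monotone _ _)⟩
    let F := DirectLimit.partialEquivLimit Sfun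
    have domtop : F.dom = ⊤ := by
      rw [← top_le_iff]
      intro m _
      have hm := Order.sequenceOfCofinals.encode_mem p0 D (Sum.inl m)
      exact dom_le_dom
        (DirectLimit.le_partialEquivLimit Sfun (Encodable.encode (Sum.inl m) + 1)) hm
    have codtop : F.cod = ⊤ := by
      rw [← top_le_iff]
      intro m _
      have hm := Order.sequenceOfCofinals.encode_mem p0 D (Sum.inr m)
      exact cod_le_cod
        (DirectLimit.le_partialEquivLimit Sfun (Encodable.encode (Sum.inr m) + 1)) hm
    refine ⟨toEquivOfEqTop domtop codtop, fun s => ?_⟩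
    have hle : f0 ≤ F := DirectLimit.le_partialEquivLimit Sfun 0
    have h1 : toEquivOfEqTop domtop codtop (s : U) =
        ((F.toEquiv ⟨(s : U), domtop.symm ▸ mem_top (s : U)⟩ : F.cod) : U) := by
      have := toEquivOfEqTop_toEmbedding domtop codtop
      calc toEquivOfEqTop domtop codtop (s : U)
          = (toEquivOfEqTop domtop codtop).toEmbedding (s : U) := rfl
      _ = toEmbeddingOfEqTop domtop (s : U) := by rw [this]
      _ = _ := toEmbeddingOfEqTop_apply domtop (s : U)
    have h2 : Substructure.inclusion (dom_le_dom hle) s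
        = ⟨(s : U), domtop.symm ▸ mem_top (s : U)⟩ := Subtype.ext rfl
    rw [h1, ← h2, toEquiv_inclusion_apply hle s]
    rfl
  classical
  intro n hn
  obtain ⟨SF, SFfin, hSF⟩ := holig n hn
  obtain ⟨ST, STfin, hST⟩ := hTolig n hn
  have gen : ∀ s : Set U,
      Substructure.closure L {a : ↥(Substructure.closure L s) | (a : U) ∈ s} = ⊤ := by
    intro s
    rw [eq_top_iff]
    rintro ⟨a, ha⟩ -
    have hmap : Substructure.map (subtype _).toHom
        (Substructure.closure L {a : ↥(Substructure.closure L s) | (a : U) ∈ s})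
        = Substructure.closure L s := by
      rw [Substructure.map_closure]
      congr 1
      ext b
      constructor
      · rintro ⟨c, hc, rfl⟩; exact hc
      · intro hb; exact ⟨⟨b, subset_closure hb⟩, hb, rfl⟩
    rw [← hmap] at ha
    obtain ⟨c, hc, hca⟩ := ha
    have hce : c = ⟨a, ‹_›⟩ := Subtype.ext hca
    rwa [← hce]
  have hdata : ∀ x : Fin n → U, ∃ zt : (Fin n → Flim) × (Fin n → T), zt.1 ∈ SF ∧ zt.2 ∈ ST ∧
      (∃ (e : ↥(closure L (Set.range x)) ↪[L] Flim) (h : Flim ≃[L] Flim),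
        ∀ i, h (e ⟨x i, subset_closure (Set.mem_range_self i)⟩) = zt.1 i) ∧
      (∃ gT : T ≃[L] T, ∀ i, gT (u (x i)) = zt.2 i) := by
    intro x
    have hfg : (closure L (Set.range x)).FG := fg_closure (Set.finite_range x)
    have hage : Bundled.mk ↥(closure L (Set.range x)) ∈ L.age U := age.fg_substructure hfg
    have hKmem : Bundled.mk ↥(closure L (Set.range x)) ∈ L.age Flim := by
      rw [hFlim.age]; exact hU.2 hage
    obtain ⟨-, ⟨e⟩⟩ := hKmem
    obtain ⟨z, hzSF, h, hh⟩ := hSF (fun i => e ⟨x i, subset_closure (Set.mem_range_self i)⟩)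
    obtain ⟨t, htST, gT, hgT⟩ := hST (fun i => u (x i))
    exact ⟨(z, t), hzSF, htST, ⟨e, h, hh⟩, ⟨gT, hgT⟩⟩
  choose inv h1 h2 h3 h4 using hdata
  have hgen : ∀ (w : Fin n → U),
      {a : ↥(closure L (Set.range w)) | (a : U) ∈ Set.range w} =
      Set.range (fun i =>
        (⟨w i, subset_closure (Set.mem_range_self i)⟩ : ↥(closure L (Set.range w)))) := by
    intro w
    ext a
    constructor
    · rintro ⟨i, hi⟩; exact ⟨i, Subtype.ext hi⟩
    · rintro ⟨i, rfl⟩; exact ⟨i, rfl⟩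
  have hrange : ∀ (w : Fin n → U) (c : ↥(closure L (Set.range w)) ↪[L] Flim)
      (z : Fin n → Flim), (∀ i, c ⟨w i, subset_closure (Set.mem_range_self i)⟩ = z i) →
      c.toHom.range = closure L (Set.range z) := by
    intro w c z hc
    rw [Hom.range_eq_map, ← gen (Set.range w), Substructure.map_closure]
    congr 1
    rw [hgen w]
    ext b
    constructor
    · rintro ⟨a, ⟨i, rfl⟩, rfl⟩
      exact ⟨i, (hc i).symm⟩
    · rintro ⟨i, rfl⟩
      exact ⟨_, ⟨i, rfl⟩, hc i⟩
  have horbit : ∀ x x' : Fin n → U, inv x = inv x' →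
      ∃ α : U ≃[L] U, ∀ i, α (x i) = x' i := by
    intro x x' hxx'
    obtain ⟨e, h, hh⟩ := h3 x
    obtain ⟨e', h', hh'⟩ := h3 x'
    obtain ⟨gT, hgT⟩ := h4 x
    obtain ⟨gT', hgT'⟩ := h4 x'
    let xh : Fin n → ↥(closure L (Set.range x)) :=
      fun i => ⟨x i, subset_closure (Set.mem_range_self i)⟩
    let xh' : Fin n → ↥(closure L (Set.range x')) :=
      fun i => ⟨x' i, subset_closure (Set.mem_range_self i)⟩
    let k : ↥(closure L (Set.range x)) ↪[L] Flim := h.toEmbedding.comp e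
    let k' : ↥(closure L (Set.range x')) ↪[L] Flim := h'.toEmbedding.comp e'
    have hz : ∀ i, k (xh i) = (inv x).1 i := fun i => hh i
    have hz' : ∀ i, k' (xh' i) = (inv x).1 i := by
      intro i; rw [hxx']; exact hh' i
    have hr : k.toHom.range = closure L (Set.range ((inv x).1)) := hrange x k _ hz
    have hr' : k'.toHom.range = closure L (Set.range ((inv x).1)) := hrange x' k' _ hz'
    have hrr : k.toHom.range ≤ k'.toHom.range := by rw [hr, hr']
    let φ : ↥(closure L (Set.range x)) ↪[L] U :=
      (subtype _).comp (k'.equivRange.symm.toEmbedding.comp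
        ((Substructure.inclusion hrr).comp k.equivRange.toEmbedding))
    have hφx : ∀ i, φ (xh i) = x' i := by
      intro i
      have e1 : k'.equivRange (xh' i) = Substructure.inclusion hrr (k.equivRange (xh i)) := by
        apply Subtype.ext
        calc ((k'.equivRange (xh' i)) : Flim) = k' (xh' i) := k'.equivRange_apply _
        _ = (inv x).1 i := hz' i
        _ = k (xh i) := (hz i).symm
        _ = ((k.equivRange (xh i)) : Flim) := (k.equivRange_apply _).symm
        _ = ((Substructure.inclusion hrr (k.equivRange (xh i))) : Flim) := rfl
      calc φ (xh i)
          = ((k'.equivRange.symm (Substructure.inclusion hrr (k.equivRange (xh i)))) : U) := rfl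
      _ = ((k'.equivRange.symm (k'.equivRange (xh' i))) : U) := by rw [← e1]
      _ = ((xh' i) : U) := by rw [k'.equivRange.symm_apply_apply]
      _ = x' i := rfl
    let g : T ≃[L] T := gT'.symm.comp gT
    have hcomp : ∀ s : ↥(closure L (Set.range x)), u (φ s) = g (u (s : U)) := by
      have heq : u.comp φ.toHom =
          (g.toHom.comp u).comp (subtype (closure L (Set.range x))).toHom := by
        apply Hom.eq_of_eqOn_dense (gen (Set.range x))
        rintro a ⟨i, hi⟩
        have ha : a = xh i := Subtype.ext hi.symm
        rw [ha]
        show u (φ (xh i)) = g (u ((xh i : ↥(closure L (Set.range x))) : U))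
        rw [hφx i]
        show u (x' i) = gT'.symm (gT (u (x i)))
        rw [hgT i, hxx', ← hgT' i, gT'.symm_apply_apply]
      intro s
      exact DFunLike.congr_fun heq s
    let f0 : U ≃ₚ[L] U := ⟨closure L (Set.range x), φ.toHom.range, φ.equivRange⟩
    have hf0fg : f0.dom.FG := fg_closure (Set.finite_range x)
    have hf0c : ∀ s : f0.dom, u (f0.toEmbedding s) = g (u (s : U)) := by
      intro s
      calc u (f0.toEmbedding s) = u (φ s) := congrArg u (φ.equivRange_apply s)
      _ = g (u (s : U)) := hcomp s
    obtain ⟨α, hα⟩ := hkey g f0 hf0fg hf0c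
    refine ⟨α, fun i => ?_⟩
    calc α (x i) = α ((xh i : ↥(closure L (Set.range x))) : U) := rfl
    _ = f0.toEmbedding (xh i) := hα (xh i)
    _ = φ (xh i) := φ.equivRange_apply _
    _ = x' i := hφx i
  let V : Set ((Fin n → Flim) × (Fin n → T)) := Set.range inv
  have Vfin : V.Finite := by
    apply Set.Finite.subset (SFfin.prod STfin)
    rintro v ⟨x, rfl⟩
    exact Set.mem_prod.2 ⟨h1 x, h2 x⟩
  haveI := Vfin.to_subtype
  have hsec : ∀ v : V, ∃ xv : Fin n → U, inv xv = v.1 := fun v => Set.mem_range.mp v.2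
  choose sec hsec' using hsec
  refine ⟨Set.range sec, Set.finite_range _, ?_⟩
  intro x
  have hv : inv x ∈ V := Set.mem_range_self x
  refine ⟨sec ⟨inv x, hv⟩, Set.mem_range_self _, ?_⟩
  obtain ⟨α, hα⟩ := horbit x (sec ⟨inv x, hv⟩) (hsec' ⟨inv x, hv⟩).symm
  exact ⟨α, hα⟩
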